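/- For every n ≥ 2 and every odd positive integer ℓ, the quotient B_n[ℓ]/B_n[4ℓ] is isomorphic to B_n/B_n[4]. -/

import Mathlib

open Matrix

/-- The braid relations on `m` generators `σ_1, …, σ_m` (0-indexed by `Fin m`). -/
def braidRels (m : ℕ) : Set (FreeGroup (Fin m)) :=
  {r | (∃ i j : Fin m, (i : ℕ) + 1 = (j : ℕ) ∧
          r = FreeGroup.of i * FreeGroup.of j * FreeGroup.of i *
              (FreeGroup.of j * FreeGroup.of i * FreeGroup.of j)⁻¹) ∨
       (∃ i j : Fin m, (i : ℕ) + 2 ≤ (j : ℕ) ∧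
          r = FreeGroup.of i * FreeGroup.of j * (FreeGroup.of j * FreeGroup.of i)⁻¹)}

/-- The braid group on `n` strands, presented on generators `σ_1, …, σ_{n-1}`. -/
def BraidGroup (n : ℕ) : Type := PresentedGroup (braidRels (n - 1))

instance (n : ℕ) : Group (BraidGroup n) :=
  inferInstanceAs (Group (PresentedGroup (braidRels (n - 1))))

/-- The generator `σ_{k+1}` (in 1-indexed notation) of the braid group. -/
def braidGen (n : ℕ) (k : Fin (n - 1)) : BraidGroup n := PresentedGroup.of k

/-- The matrix of the generator `σ_{k+1}` under the reduced integral Burau representation. -/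
def burauMatrix (n : ℕ) (k : Fin (n - 1)) : Matrix (Fin (n - 1)) (Fin (n - 1)) ℤ :=
  Matrix.of fun a b =>
    if a = b then 1
    else if (a : ℕ) + 1 = (k : ℕ) ∧ b = k then -1
    else if (a : ℕ) = (k : ℕ) + 1 ∧ b = k then 1
    else 0

/-- `ρ` is the reduced integral Burau representation iff it takes the prescribed
values on the generators. -/
def IsBurau (n : ℕ) (ρ : BraidGroup n →* GL (Fin (n - 1)) ℤ) : Prop :=
  ∀ k : Fin (n - 1),
    (ρ (braidGen n k) : Matrix (Fin (n - 1)) (Fin (n - 1)) ℤ) = burauMatrix n k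

/-- The level `ℓ` congruence subgroup `B_n[ℓ]`: the kernel of the composition of the
reduced integral Burau representation with entrywise reduction mod `ℓ`. -/
def congSubgroup (n : ℕ) (ρ : BraidGroup n →* GL (Fin (n - 1)) ℤ) (ℓ : ℕ) :
    Subgroup (BraidGroup n) :=
  ((Matrix.GeneralLinearGroup.map (Int.castRingHom (ZMod ℓ))).comp ρ).ker

instance (n : ℕ) (ρ : BraidGroup n →* GL (Fin (n - 1)) ℤ) (ℓ : ℕ) :
    (congSubgroup n ρ ℓ).Normal :=
  MonoidHom.normal_ker _

instance (n : ℕ) (ρ : BraidGroup n →* GL (Fin (n - 1)) ℤ) (ℓ : ℕ)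
    (K : Subgroup (BraidGroup n)) : ((congSubgroup n ρ ℓ).subgroupOf K).Normal :=
  Subgroup.Normal.subgroupOf (MonoidHom.normal_ker _) K

section AuxLemmas

lemma pow_one_add_sq_zero {R : Type*} [Ring R] (N : R) (h : N * N = 0) (m : ℕ) :
    (1 + N) ^ m = 1 + m • N := by
  induction m with
  | zero => simp
  | succ m ih =>
    rw [pow_succ, ih, add_smul, one_smul, mul_add, mul_one, add_mul, one_mul,
      smul_mul_assoc, h, smul_zero, add_zero]
    abel

lemma burau_sub_one_sq (n : ℕ) (k : Fin (n - 1)) :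
    (burauMatrix n k - 1) * (burauMatrix n k - 1) = 0 := by
  ext a b
  simp only [Matrix.mul_apply, Matrix.zero_apply]
  apply Finset.sum_eq_zero
  intro c _
  by_cases hc : c = k
  · have h2 : (burauMatrix n k - 1) c b = 0 := by
      rw [hc]
      simp only [burauMatrix, Matrix.sub_apply, Matrix.one_apply, Matrix.of_apply]
      split_ifs <;> simp_all <;> omega
    rw [h2, mul_zero]
  · have h1 : (burauMatrix n k - 1) a c = 0 := by
      simp only [burauMatrix, Matrix.sub_apply, Matrix.one_apply, Matrix.of_apply]
      split_ifs <;> simp_all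
    rw [h1, zero_mul]

/-- The matrix of the image of `σ_k^m` reduced mod `m'` is the identity whenever `m' ∣ m`. -/
lemma gen_pow_mem (n : ℕ) (ρ : BraidGroup n →* GL (Fin (n - 1)) ℤ) (hρ : IsBurau n ρ)
    (k : Fin (n - 1)) (m m' : ℕ) (h : m' ∣ m) :
    braidGen n k ^ m ∈ congSubgroup n ρ m' := by
  have key : ((burauMatrix n k).map (Int.castRingHom (ZMod m') :)) ^ m = 1 := by
    set f := Int.castRingHom (ZMod m')
    have hN : ((burauMatrix n k - 1).map (f :)) * ((burauMatrix n k - 1).map (f :)) = 0 := by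
      have := congrArg (RingHom.mapMatrix f) (burau_sub_one_sq n k)
      simpa using this
    have hA : (burauMatrix n k).map (f :) =
        1 + (burauMatrix n k - 1).map (f :) := by
      have : (burauMatrix n k - 1).map (f :) =
          (RingHom.mapMatrix f) (burauMatrix n k) - (RingHom.mapMatrix f) 1 := by
        simpa using map_sub (RingHom.mapMatrix f) (burauMatrix n k) 1
      rw [this]
      simp [RingHom.mapMatrix_apply]
    rw [hA, pow_one_add_sq_zero _ hN]
    have hm : (m : ZMod m') = 0 := (ZMod.natCast_eq_zero_iff m m').mpr h
    have : (m • ((burauMatrix n k - 1).map (f :)) :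
        Matrix (Fin (n - 1)) (Fin (n - 1)) (ZMod m')) = 0 := by
      ext i j
      simp [nsmul_eq_mul, hm]
    rw [this, add_zero]
  show ((Matrix.GeneralLinearGroup.map (Int.castRingHom (ZMod m'))).comp ρ)
      (braidGen n k ^ m) = 1
  rw [map_pow]
  apply Units.ext
  have hval : (((Matrix.GeneralLinearGroup.map (Int.castRingHom (ZMod m'))).comp ρ)
      (braidGen n k) : Matrix (Fin (n - 1)) (Fin (n - 1)) (ZMod m')) =
      (RingHom.mapMatrix (Int.castRingHom (ZMod m')))
        ((ρ (braidGen n k) : Matrix (Fin (n - 1)) (Fin (n - 1)) ℤ)) := rfl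
  rw [Units.val_pow_eq_pow_val, hval, hρ k, RingHom.mapMatrix_apply, key]
  rfl

/-- Membership in the congruence subgroup as an entrywise divisibility condition. -/
lemma mem_congSubgroup_iff (n : ℕ) (ρ : BraidGroup n →* GL (Fin (n - 1)) ℤ) (m : ℕ)
    (g : BraidGroup n) :
    g ∈ congSubgroup n ρ m ↔ ∀ i j, (m : ℤ) ∣
      ((1 : Matrix (Fin (n - 1)) (Fin (n - 1)) ℤ) i j
        - (ρ g : Matrix (Fin (n - 1)) (Fin (n - 1)) ℤ) i j) := by
  have helper : ∀ x y : ℤ, ((x : ZMod m) = (y : ZMod m)) ↔ (m : ℤ) ∣ y - x := fun x y =>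
    (ZMod.intCast_eq_intCast_iff x y m).trans Int.modEq_iff_dvd
  have hmem : g ∈ congSubgroup n ρ m ↔
      ((ρ g : Matrix (Fin (n - 1)) (Fin (n - 1)) ℤ)).map
          ((Int.castRingHom (ZMod m)) : ℤ → ZMod m)
        = (1 : Matrix (Fin (n - 1)) (Fin (n - 1)) (ZMod m)) := by
    constructor
    · intro hg
      have h1 : ((Matrix.GeneralLinearGroup.map (Int.castRingHom (ZMod m))).comp ρ) g = 1 := hg
      exact congrArg Units.val h1
    · intro hmat
      show ((Matrix.GeneralLinearGroup.map (Int.castRingHom (ZMod m))).comp ρ) g = 1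
      exact Units.ext hmat
  have hone : ∀ i j : Fin (n - 1), ((1 : Matrix (Fin (n - 1)) (Fin (n - 1)) (ZMod m)) i j) =
      (((1 : Matrix (Fin (n - 1)) (Fin (n - 1)) ℤ) i j : ℤ) : ZMod m) := by
    intro i j
    by_cases hij : i = j <;> simp [Matrix.one_apply, hij]
  rw [hmem, ← Matrix.ext_iff]
  constructor
  · intro h i j
    have := h i j
    rw [Matrix.map_apply, hone i j] at this
    exact (helper _ _).mp this
  · intro h i j
    rw [Matrix.map_apply, hone i j]
    exact (helper _ _).mpr (h i j)

lemma congSubgroup_crt (n : ℕ) (ρ : BraidGroup n →* GL (Fin (n - 1)) ℤ) (ℓ : ℕ)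
    (hodd : Odd ℓ) :
    congSubgroup n ρ (4 * ℓ) = congSubgroup n ρ 4 ⊓ congSubgroup n ρ ℓ := by
  have hcop : Nat.Coprime 4 ℓ := by
    have := (Nat.coprime_two_left.mpr hodd).pow_left 2
    norm_num at this
    exact this
  have hcopZ : IsCoprime (4 : ℤ) (ℓ : ℤ) := by
    have := Nat.isCoprime_iff_coprime.mpr hcop
    exact_mod_cast this
  ext g
  simp only [Subgroup.mem_inf, mem_congSubgroup_iff]
  constructor
  · intro h
    refine ⟨fun i j => ?_, fun i j => ?_⟩
    · exact dvd_trans ⟨(ℓ : ℤ), by push_cast; ring⟩ (h i j)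
    · exact dvd_trans ⟨(4 : ℤ), by push_cast; ring⟩ (h i j)
  · rintro ⟨h4, hℓ'⟩ i j
    have := hcopZ.mul_dvd (h4 i j) (hℓ' i j)
    simpa [Int.natCast_mul] using this

lemma sup_eq_top (n : ℕ) (ρ : BraidGroup n →* GL (Fin (n - 1)) ℤ) (hρ : IsBurau n ρ)
    (ℓ : ℕ) (hodd : Odd ℓ) :
    congSubgroup n ρ ℓ ⊔ congSubgroup n ρ 4 = ⊤ := by
  obtain ⟨s, hs⟩ := hodd
  have hsq : ℓ * ℓ = 1 + 4 * (s * s + s) := by subst hs; ring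
  have hcl : Subgroup.closure (Set.range (braidGen n)) = ⊤ :=
    PresentedGroup.closure_range_of (braidRels (n - 1))
  rw [eq_top_iff, ← hcl, Subgroup.closure_le]
  rintro x ⟨k, rfl⟩
  show braidGen n k ∈ congSubgroup n ρ ℓ ⊔ congSubgroup n ρ 4
  have h1 : braidGen n k ^ (ℓ * ℓ) ∈ congSubgroup n ρ ℓ :=
    gen_pow_mem n ρ hρ k (ℓ * ℓ) ℓ ⟨ℓ, rfl⟩
  have h2 : braidGen n k ^ 4 ∈ congSubgroup n ρ 4 :=
    gen_pow_mem n ρ hρ k 4 4 dvd_rfl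
  have hdecomp : braidGen n k =
      braidGen n k ^ (ℓ * ℓ) * ((braidGen n k ^ 4) ^ (s * s + s))⁻¹ := by
    rw [← pow_mul, hsq, pow_add, pow_one]
    group
  rw [hdecomp]
  exact mul_mem (Subgroup.mem_sup_left h1)
    (inv_mem (Subgroup.mem_sup_right (pow_mem h2 _)))

end AuxLemmas

open Pointwise

/-- For every `n ≥ 2` and every odd positive integer `ℓ`, the quotient
`B_n[ℓ] / B_n[4ℓ]` is isomorphic to `B_n / B_n[4]`. -/
theorem congSubgroup_quotient_iso (n : ℕ) (hn : 2 ≤ n) (ℓ : ℕ) (hℓ : 0 < ℓ)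
    (hodd : Odd ℓ)
    (ρ : BraidGroup n →* GL (Fin (n - 1)) ℤ) (hρ : IsBurau n ρ) :
    Nonempty
      ((↥(congSubgroup n ρ ℓ) ⧸
          (congSubgroup n ρ (4 * ℓ)).subgroupOf (congSubgroup n ρ ℓ)) ≃*
        (BraidGroup n ⧸ congSubgroup n ρ 4)) := by
  let φ : ↥(congSubgroup n ρ ℓ) →* BraidGroup n ⧸ congSubgroup n ρ 4 :=
    (QuotientGroup.mk' (congSubgroup n ρ 4)).comp (congSubgroup n ρ ℓ).subtype
  have hsurj : Function.Surjective φ := by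
    intro q
    obtain ⟨g, rfl⟩ := QuotientGroup.mk'_surjective (congSubgroup n ρ 4) q
    have hg : g ∈ ((congSubgroup n ρ ℓ : Set (BraidGroup n)) *
        (congSubgroup n ρ 4 : Set (BraidGroup n))) := by
      rw [← Subgroup.mul_normal]
      have hg' : g ∈ congSubgroup n ρ ℓ ⊔ congSubgroup n ρ 4 := by
        rw [sup_eq_top n ρ hρ ℓ hodd]; trivial
      exact hg'
    obtain ⟨h, hh, x, hx, rfl⟩ := hg
    refine ⟨⟨h, hh⟩, ?_⟩
    show QuotientGroup.mk' (congSubgroup n ρ 4) h =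
      QuotientGroup.mk' (congSubgroup n ρ 4) (h * x)
    rw [QuotientGroup.mk'_eq_mk']
    exact ⟨x, hx, rfl⟩
  have hker : φ.ker = (congSubgroup n ρ (4 * ℓ)).subgroupOf (congSubgroup n ρ ℓ) := by
    ext x
    rw [MonoidHom.mem_ker, Subgroup.mem_subgroupOf, congSubgroup_crt n ρ ℓ hodd,
      Subgroup.mem_inf]
    have hmk : φ x = QuotientGroup.mk' (congSubgroup n ρ 4) (x : BraidGroup n) := rfl
    rw [hmk, ← MonoidHom.mem_ker, QuotientGroup.ker_mk']
    exact ⟨fun h => ⟨h, x.2⟩, fun h => h.1⟩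
  exact ⟨(QuotientGroup.quotientMulEquivOfEq hker.symm).trans
    (QuotientGroup.quotientKerEquivOfSurjective φ hsurj)⟩
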